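/- arXiv:1402.4360 — 2 statements merged into one kernel-verified Lean document; each statement's English description precedes it below -/
import Mathlib

section
/- Let X and Y be finite-valued random variables on a probability space, and define X̃ to be the random variable ω ↦ (the conditional distribution of Y given X = X(ω)) and Ỹ to be the random variable ω ↦ (the conditional distribution of X given Y = Y(ω)) (each taking finitely many values in the space of probability measures). Then the following are equivalent: (i) the pair (X,Y) is trivial; (ii) H[X̃ | Ỹ] = 0; (iii) H[Ỹ | X̃] = 0. -/
open MeasureTheory Real
open scoped ENNReal

namespace SecureComputation

variable {Ω : Type*} [MeasurableSpace Ω]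

/-- The pair random variable `⟨X,Y⟩`. -/
def pair {𝒳 𝒴 : Type*} (X : Ω → 𝒳) (Y : Ω → 𝒴) : Ω → 𝒳 × 𝒴 := fun ω => (X ω, Y ω)

/-- Shannon entropy `H[X]` of a finite-valued random variable. -/
noncomputable def ent {𝒳 : Type*} (μ : Measure Ω) (X : Ω → 𝒳) : ℝ :=
  ∑' x : 𝒳, negMulLog ((μ (X ⁻¹' {x})).toReal)

/-- Mutual information `I[X;Y]`. -/
noncomputable def mi {𝒳 𝒴 : Type*} (μ : Measure Ω) (X : Ω → 𝒳) (Y : Ω → 𝒴) : ℝ :=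
  ent μ X + ent μ Y - ent μ (pair X Y)

/-- Conditional mutual information `I[X;Y|Z]`. -/
noncomputable def cmi {𝒳 𝒴 𝒵 : Type*} (μ : Measure Ω) (X : Ω → 𝒳) (Y : Ω → 𝒴)
    (Z : Ω → 𝒵) : ℝ :=
  ent μ (pair X Z) + ent μ (pair Y Z) - ent μ (pair (pair X Y) Z) - ent μ Z

/-- Conditional entropy `H[X|Y]`. -/
noncomputable def condEnt {𝒳 𝒴 : Type*} (μ : Measure Ω) (X : Ω → 𝒳) (Y : Ω → 𝒴) : ℝ :=
  ent μ (pair X Y) - ent μ Y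

/-- A finite-valued random variable: preimages of points are measurable. -/
def DiscreteRV {𝒳 : Type*} (X : Ω → 𝒳) : Prop := ∀ x, MeasurableSet (X ⁻¹' {x})

/-- The pair `(X,Y)` is trivial: some finite-valued `Z` on the same space has
`I[X;Y|Z] = 0`, `I[Z;X|Y] = 0`, `I[Z;Y|X] = 0`. -/
def IsTrivialPair {𝒳 𝒴 : Type*} (μ : Measure Ω) (X : Ω → 𝒳) (Y : Ω → 𝒴) : Prop :=
  ∃ (𝒵 : Type) (_ : Fintype 𝒵) (Z : Ω → 𝒵), DiscreteRV Z ∧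
    cmi μ X Y Z = 0 ∧ cmi μ Z X Y = 0 ∧ cmi μ Z Y X = 0

/-- The random variable `ω ↦ (the conditional distribution of `Y` given `X = X ω`)`,
viewed as a (finitely-valued) map into the space of probability vectors on `𝒴`. -/
noncomputable def condDist {𝒳 𝒴 : Type*} (μ : Measure Ω) (X : Ω → 𝒳) (Y : Ω → 𝒴) :
    Ω → (𝒴 → ℝ) :=
  fun ω y => (μ {ω' | Y ω' = y ∧ X ω' = X ω}).toReal / (μ {ω' | X ω' = X ω}).toReal

set_option linter.unusedSectionVars false
set_option maxHeartbeats 1000000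
open scoped Classical

lemma pair_preimage {α β : Type*} (A : Ω → α) (B : Ω → β) (a : α) (b : β) :
    pair A B ⁻¹' {(a, b)} = A ⁻¹' {a} ∩ B ⁻¹' {b} := by
  ext ω; simp [pair, Prod.ext_iff, Set.mem_inter_iff]

lemma ent_comp_inj {α β : Type*} (μ : Measure Ω) (W : Ω → α) {ι : α → β}
    (hι : Function.Injective ι) : ent μ (ι ∘ W) = ent μ W := by
  have hsupp : Function.support (fun b => negMulLog ((μ ((ι ∘ W) ⁻¹' {b})).toReal))
      ⊆ Set.range ι := by
    intro b hb
    by_contra hbr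
    apply hb
    have h0 : (ι ∘ W) ⁻¹' {b} = ∅ := by
      ext ω
      simp only [Set.mem_preimage, Set.mem_singleton_iff, Set.mem_empty_iff_false, iff_false,
        Function.comp_apply]
      exact fun h => hbr ⟨W ω, h⟩
    simp [h0]
  rw [ent, ent, ← hι.tsum_eq hsupp]
  refine tsum_congr fun a => ?_
  congr 3
  ext ω
  simp [hι.eq_iff]

lemma ent_congr {α β : Type*} (μ : Measure Ω) {W : Ω → α} {V : Ω → β} (ι : α → β)
    (hι : Function.Injective ι) (h : ∀ ω, V ω = ι (W ω)) : ent μ V = ent μ W := by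
  have : V = ι ∘ W := funext h
  rw [this, ent_comp_inj μ W hι]

lemma meas_biUnion_inter {α : Type*} (μ : Measure Ω) {A : Ω → α} (hA : DiscreteRV A)
    (s : Finset α) {T : Set Ω} (hT : MeasurableSet T) :
    μ ((⋃ a ∈ s, A ⁻¹' {a}) ∩ T) = ∑ a ∈ s, μ (A ⁻¹' {a} ∩ T) := by
  rw [Set.iUnion₂_inter]
  refine measure_biUnion_finset ?_ fun a _ => (hA a).inter hT
  intro a _ a' _ hne
  refine Set.disjoint_left.2 ?_
  rintro ω ⟨h1, _⟩ ⟨h2, _⟩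
  exact hne (by rw [← h1, ← h2])

lemma meas_toReal_sum {α : Type*} [Fintype α] (μ : Measure Ω) [IsFiniteMeasure μ]
    {A : Ω → α} (hA : DiscreteRV A) {T : Set Ω} (hT : MeasurableSet T) :
    (μ T).toReal = ∑ a, (μ (A ⁻¹' {a} ∩ T)).toReal := by
  have h1 : (⋃ a ∈ (Finset.univ : Finset α), A ⁻¹' {a}) = Set.univ := by
    ext ω; simp
  have h2 := meas_biUnion_inter μ hA Finset.univ hT
  rw [h1, Set.univ_inter] at h2
  rw [h2, ENNReal.toReal_sum fun a _ => measure_ne_top μ _]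

lemma comp_preimage_eq {α S : Type*} [Fintype α] (A : Ω → α) (h : α → S) (s : S)
    [DecidablePred fun a => h a = s] :
    (h ∘ A) ⁻¹' {s} = ⋃ a ∈ Finset.univ.filter (fun a => h a = s), A ⁻¹' {a} := by
  ext ω
  simp only [Set.mem_preimage, Set.mem_singleton_iff, Function.comp_apply, Set.mem_iUnion,
    Finset.mem_filter, Finset.mem_univ, true_and]
  constructor
  · intro hh; exact ⟨A ω, hh, rfl⟩
  · rintro ⟨a, ha, ha2⟩; rw [ha2]; exact ha

lemma meas_comp_inter {α S : Type*} [Fintype α] (μ : Measure Ω) {A : Ω → α}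
    (hA : DiscreteRV A) (h : α → S) (s : S) {T : Set Ω} (hT : MeasurableSet T)
    [DecidablePred fun a => h a = s] :
    μ ((h ∘ A) ⁻¹' {s} ∩ T) = ∑ a ∈ Finset.univ.filter (fun a => h a = s), μ (A ⁻¹' {a} ∩ T) := by
  rw [comp_preimage_eq A h s, meas_biUnion_inter μ hA _ hT]

lemma DiscreteRV.comp {α S : Type*} [Fintype α] {A : Ω → α} (hA : DiscreteRV A) (h : α → S) :
    DiscreteRV (h ∘ A) := by
  intro s
  classical
  rw [comp_preimage_eq A h s]
  exact (Finset.univ.filter (fun a => h a = s)).measurableSet_biUnion fun a _ => hA a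

lemma DiscreteRV.pair_rv {α β : Type*} {A : Ω → α} {B : Ω → β} (hA : DiscreteRV A)
    (hB : DiscreteRV B) : DiscreteRV (pair A B) := by
  rintro ⟨a, b⟩
  rw [pair_preimage]
  exact (hA a).inter (hB b)

lemma ent_fintype {α : Type*} [Fintype α] (μ : Measure Ω) (A : Ω → α) :
    ent μ A = ∑ a, negMulLog ((μ (A ⁻¹' {a})).toReal) := tsum_fintype _

lemma ent_pair_fintype {α β : Type*} [Fintype α] [Fintype β] (μ : Measure Ω)
    (A : Ω → α) (B : Ω → β) :
    ent μ (pair A B) = ∑ a, ∑ b, negMulLog ((μ (A ⁻¹' {a} ∩ B ⁻¹' {b})).toReal) := by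
  rw [ent_fintype, Fintype.sum_prod_type]
  exact Finset.sum_congr rfl fun a _ => Finset.sum_congr rfl fun b _ => by
    rw [pair_preimage]

lemma condEnt_eq_zero_iff {α β : Type*} [Fintype α] [Fintype β] (μ : Measure Ω)
    [IsProbabilityMeasure μ] {A : Ω → α} {B : Ω → β} (hA : DiscreteRV A) (hB : DiscreteRV B) :
    condEnt μ A B = 0 ↔ ∀ a b, μ (A ⁻¹' {a} ∩ B ⁻¹' {b}) = 0 ∨
      μ (A ⁻¹' {a} ∩ B ⁻¹' {b}) = μ (B ⁻¹' {b}) := by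
  set pab : α → β → ℝ := fun a b => (μ (A ⁻¹' {a} ∩ B ⁻¹' {b})).toReal with hpab
  set pb : β → ℝ := fun b => (μ (B ⁻¹' {b})).toReal with hpb
  have hnn : ∀ a b, 0 ≤ pab a b := fun a b => ENNReal.toReal_nonneg
  have hle : ∀ a b, pab a b ≤ pb b := fun a b =>
    ENNReal.toReal_mono (measure_ne_top μ _) (measure_mono Set.inter_subset_right)
  have hsum : ∀ b, pb b = ∑ a, pab a b := fun b => meas_toReal_sum μ hA (hB b)
  have hform : condEnt μ A B = ∑ a, ∑ b, pab a b * (log (pb b) - log (pab a b)) := by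
    rw [condEnt, ent_pair_fintype μ A B, ent_fintype μ B]
    have h1 : ∑ b, negMulLog (pb b) = ∑ a, ∑ b, (pab a b * log (pb b)) * (-1) := by
      rw [Finset.sum_comm]
      refine Finset.sum_congr rfl fun b _ => ?_
      have : ∑ a, (pab a b * log (pb b)) * (-1) = -((∑ a, pab a b) * log (pb b)) := by
        simp only [mul_neg_one]
        rw [Finset.sum_neg_distrib, ← Finset.sum_mul]
      rw [this, ← hsum b]
      simp [negMulLog_eq_neg]
    rw [h1, ← Finset.sum_sub_distrib]
    refine Finset.sum_congr rfl fun a _ => ?_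
    rw [← Finset.sum_sub_distrib]
    refine Finset.sum_congr rfl fun b _ => ?_
    simp only [negMulLog_eq_neg]
    ring
  have hterm : ∀ a b, 0 ≤ pab a b * (log (pb b) - log (pab a b)) := by
    intro a b
    rcases eq_or_lt_of_le (hnn a b) with h0 | h0
    · rw [← h0]; simp
    · have hlog : log (pab a b) ≤ log (pb b) := by
        rw [Real.log_le_log_iff h0 (lt_of_lt_of_le h0 (hle a b))]
        exact hle a b
      nlinarith
  rw [hform,
    Finset.sum_eq_zero_iff_of_nonneg (fun a _ => Finset.sum_nonneg fun b _ => hterm a b)]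
  constructor
  · intro h a b
    have h2 := (Finset.sum_eq_zero_iff_of_nonneg fun b _ => hterm a b).1
      (h a (Finset.mem_univ a)) b (Finset.mem_univ b)
    rcases mul_eq_zero.1 h2 with h3 | h3
    · left
      have := (ENNReal.toReal_eq_zero_iff _).1 h3
      rcases this with h4 | h4
      · exact h4
      · exact absurd h4 (measure_ne_top μ _)
    · rcases eq_or_lt_of_le (hnn a b) with h0 | h0
      · left
        have := (ENNReal.toReal_eq_zero_iff _).1 h0.symm
        rcases this with h4 | h4
        · exact h4
        · exact absurd h4 (measure_ne_top μ _)
      · right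
        rcases eq_or_lt_of_le (hle a b) with h5 | h5
        · exact (ENNReal.toReal_eq_toReal_iff' (measure_ne_top μ _) (measure_ne_top μ _)).1 h5
        · exact absurd (sub_eq_zero.1 h3).symm (ne_of_lt (Real.log_lt_log h0 h5))
  · intro h a _
    refine Finset.sum_eq_zero fun b _ => ?_
    rcases h a b with h1 | h1
    · have : pab a b = 0 := by simp [hpab, h1]
      rw [this]; ring
    · have : pab a b = pb b := by simp [hpab, hpb, h1]
      rw [this, sub_self, mul_zero]

lemma sum_comm3 {α β γ M : Type*} [Fintype α] [Fintype β] [Fintype γ] [AddCommMonoid M]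
    (f : α → β → γ → M) : ∑ a, ∑ b, ∑ c, f a b c = ∑ c, ∑ a, ∑ b, f a b c := by
  rw [show (∑ a, ∑ b, ∑ c, f a b c) = ∑ a, ∑ c, ∑ b, f a b c from
    Finset.sum_congr rfl fun a _ => Finset.sum_comm]
  exact Finset.sum_comm

private lemma kl_point {p A B P : ℝ} (hp : 0 ≤ p) (hpA : p ≤ A) (hpB : p ≤ B)
    (hA : 0 ≤ A) (hB : 0 ≤ B) (hP : 0 ≤ P) (hAP : A ≤ P) :
    (if P = 0 then 0 else p - A * B / P) ≤ p * ((log p + log P) - (log A + log B)) ∧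
    ((if P = 0 then 0 else p - A * B / P) = p * ((log p + log P) - (log A + log B)) →
      p * P = A * B) := by
  by_cases hP0 : P = 0
  · have hp0 : p = 0 := le_antisymm (hpA.trans (hAP.trans_eq hP0)) hp
    have hA0 : A = 0 := le_antisymm (hAP.trans_eq hP0) hA
    simp [hP0, hp0, hA0]
  · have hPpos : 0 < P := lt_of_le_of_ne hP (Ne.symm hP0)
    rw [if_neg hP0]
    by_cases hp0 : p = 0
    · constructor
      · rw [hp0]
        simp only [zero_mul, zero_sub, neg_nonpos]
        exact div_nonneg (mul_nonneg hA hB) hP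
      · intro h
        rw [hp0] at h ⊢
        simp only [zero_mul, zero_sub, neg_eq_zero] at h ⊢
        rcases div_eq_zero_iff.1 h with h1 | h1
        · exact h1.symm
        · exact absurd h1 hP0
    · have hppos : 0 < p := lt_of_le_of_ne hp (Ne.symm hp0)
      have hApos : 0 < A := lt_of_lt_of_le hppos hpA
      have hBpos : 0 < B := lt_of_lt_of_le hppos hpB
      set r : ℝ := A * B / (p * P) with hr
      have hrpos : 0 < r := by positivity
      have hlogr : log r = (log A + log B) - (log p + log P) := by
        rw [hr, Real.log_div (by positivity) (by positivity),
          Real.log_mul (ne_of_gt hApos) (ne_of_gt hBpos),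
          Real.log_mul (ne_of_gt hppos) (ne_of_gt hPpos)]
    -- u = p * (1 - r), t = p * (-log r)
      have hueq : p - A * B / P = p * (1 - r) := by
        rw [hr]; field_simp
      have hteq : p * ((log p + log P) - (log A + log B)) = p * (-log r) := by
        rw [hlogr]; ring
      have hlog_le : log r ≤ r - 1 := Real.log_le_sub_one_of_pos hrpos
      constructor
      · rw [hueq, hteq]
        nlinarith [hlog_le, hppos]
      · intro h
        rw [hueq, hteq] at h
        have h2 : 1 - r = -log r := mul_left_cancel₀ (ne_of_gt hppos) h
        have hr1 : r = 1 := by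
          by_contra hne
          have := Real.log_lt_sub_one_of_pos hrpos hne
          linarith
        have : A * B = p * P := by
          have := hr1
          rw [hr] at this
          field_simp at this
          linarith
        linarith

lemma kl_aux {α β γ : Type*} [Fintype α] [Fintype β] [Fintype γ]
    (p3 : α → β → γ → ℝ) (pac : α → γ → ℝ) (pbc : β → γ → ℝ) (pc : γ → ℝ)
    (hnn : ∀ a b c, 0 ≤ p3 a b c)
    (hm1 : ∀ a c, pac a c = ∑ b, p3 a b c)
    (hm2 : ∀ b c, pbc b c = ∑ a, p3 a b c)
    (hm3 : ∀ c, pc c = ∑ a, pac a c)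
    (hm3' : ∀ c, pc c = ∑ b, pbc b c) :
    (∑ a, ∑ b, ∑ c, p3 a b c *
        ((log (p3 a b c) + log (pc c)) - (log (pac a c) + log (pbc b c))) = 0)
      ↔ ∀ a b c, p3 a b c * pc c = pac a c * pbc b c := by
  have hac_nn : ∀ a c, 0 ≤ pac a c := fun a c => by
    rw [hm1]; exact Finset.sum_nonneg fun b _ => hnn a b c
  have hbc_nn : ∀ b c, 0 ≤ pbc b c := fun b c => by
    rw [hm2]; exact Finset.sum_nonneg fun a _ => hnn a b c
  have hc_nn : ∀ c, 0 ≤ pc c := fun c => by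
    rw [hm3]; exact Finset.sum_nonneg fun a _ => hac_nn a c
  have hle_ac : ∀ a b c, p3 a b c ≤ pac a c := fun a b c => by
    rw [hm1]; exact Finset.single_le_sum (fun b _ => hnn a b c) (Finset.mem_univ b)
  have hle_bc : ∀ a b c, p3 a b c ≤ pbc b c := fun a b c => by
    rw [hm2]; exact Finset.single_le_sum (fun a _ => hnn a b c) (Finset.mem_univ a)
  have hle_ac_c : ∀ a c, pac a c ≤ pc c := fun a c => by
    rw [hm3]; exact Finset.single_le_sum (fun a _ => hac_nn a c) (Finset.mem_univ a)
  set t : α → β → γ → ℝ := fun a b c => p3 a b c *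
      ((log (p3 a b c) + log (pc c)) - (log (pac a c) + log (pbc b c))) with ht
  set u : α → β → γ → ℝ := fun a b c =>
      if pc c = 0 then 0 else p3 a b c - pac a c * pbc b c / pc c with hu
  have hpoint : ∀ a b c, u a b c ≤ t a b c ∧ (u a b c = t a b c → p3 a b c * pc c = pac a c * pbc b c) :=
    fun a b c => kl_point (hnn a b c) (hle_ac a b c) (hle_bc a b c) (hac_nn a c)
      (hbc_nn b c) (hc_nn c) (hle_ac_c a c)
  have hsum_u : ∑ a, ∑ b, ∑ c, u a b c = 0 := by
    rw [sum_comm3]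
    refine Finset.sum_eq_zero fun c _ => ?_
    by_cases hc : pc c = 0
    · exact Finset.sum_eq_zero fun a _ => Finset.sum_eq_zero fun b _ => by simp [hu, hc]
    · refine Finset.sum_eq_zero fun a _ => ?_
      have h1 : ∑ b, u a b c = (∑ b, p3 a b c) - ∑ b, pac a c * pbc b c / pc c := by
        rw [← Finset.sum_sub_distrib]
        exact Finset.sum_congr rfl fun b _ => by simp [hu, hc]
      have h2 : pac a c * (∑ b, pbc b c) / pc c = ∑ b, pac a c * pbc b c / pc c := by
        simp only [Finset.mul_sum, Finset.sum_div]
      rw [h1, ← h2, ← hm3' c, ← hm1 a c, mul_div_assoc, div_self hc, mul_one, sub_self]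
  have hflat : ∀ v : α → β → γ → ℝ,
      ∑ x : α × β × γ, v x.1 x.2.1 x.2.2 = ∑ a, ∑ b, ∑ c, v a b c := by
    intro v
    rw [Fintype.sum_prod_type]
    exact Finset.sum_congr rfl fun a _ => Fintype.sum_prod_type _
  constructor
  · intro hsum_t
    have heq : ∑ x : α × β × γ, u x.1 x.2.1 x.2.2 = ∑ x : α × β × γ, t x.1 x.2.1 x.2.2 := by
      rw [hflat, hflat, hsum_u, hsum_t]
    have hpt := (Finset.sum_eq_sum_iff_of_le fun x _ => (hpoint x.1 x.2.1 x.2.2).1).1 heq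
    intro a b c
    exact (hpoint a b c).2 (hpt (a, b, c) (Finset.mem_univ _))
  · intro hCI
    refine Finset.sum_eq_zero fun a _ => Finset.sum_eq_zero fun b _ =>
      Finset.sum_eq_zero fun c _ => ?_
    by_cases h3 : p3 a b c = 0
    · simp [ht, h3]
    · have h3pos : 0 < p3 a b c := lt_of_le_of_ne (hnn a b c) (Ne.symm h3)
      have hacpos : 0 < pac a c := lt_of_lt_of_le h3pos (hle_ac a b c)
      have hbcpos : 0 < pbc b c := lt_of_lt_of_le h3pos (hle_bc a b c)
      have hcpos : 0 < pc c := lt_of_lt_of_le (lt_of_lt_of_le h3pos (hle_ac a b c)) (hle_ac_c a c)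
      have hlogs : log (p3 a b c) + log (pc c) = log (pac a c) + log (pbc b c) := by
        rw [← Real.log_mul h3 (ne_of_gt hcpos), hCI a b c,
          Real.log_mul (ne_of_gt hacpos) (ne_of_gt hbcpos)]
      simp [ht, hlogs]

/-- `P(A = a)` as a real number. -/
noncomputable def pp {α : Type*} (μ : Measure Ω) (A : Ω → α) (a : α) : ℝ :=
  (μ (A ⁻¹' {a})).toReal

/-- `P(A = a, B = b)` as a real number. -/
noncomputable def pp2 {α β : Type*} (μ : Measure Ω) (A : Ω → α) (B : Ω → β) (a : α) (b : β) : ℝ :=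
  (μ (A ⁻¹' {a} ∩ B ⁻¹' {b})).toReal

/-- `P(A = a, B = b, C = c)` as a real number. -/
noncomputable def pp3 {α β γ : Type*} (μ : Measure Ω) (A : Ω → α) (B : Ω → β) (C : Ω → γ)
    (a : α) (b : β) (c : γ) : ℝ :=
  (μ (A ⁻¹' {a} ∩ B ⁻¹' {b} ∩ C ⁻¹' {c})).toReal

section Marginals

variable {α β γ : Type*} [Fintype α] [Fintype β] [Fintype γ]
variable (μ : Measure Ω) [IsProbabilityMeasure μ]
variable {A : Ω → α} {B : Ω → β} {C : Ω → γ}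

lemma pp_nonneg (A : Ω → α) (a : α) : 0 ≤ pp μ A a := ENNReal.toReal_nonneg
lemma pp2_nonneg (A : Ω → α) (B : Ω → β) (a b) : 0 ≤ pp2 μ A B a b := ENNReal.toReal_nonneg
lemma pp3_nonneg (A : Ω → α) (B : Ω → β) (C : Ω → γ) (a b c) : 0 ≤ pp3 μ A B C a b c :=
  ENNReal.toReal_nonneg

lemma pp_marg (hA : DiscreteRV A) (hC : DiscreteRV C) (c : γ) :
    pp μ C c = ∑ a, pp2 μ A C a c :=
  meas_toReal_sum μ hA (hC c)

lemma pp2_marg_mid (hA : DiscreteRV A) (hB : DiscreteRV B) (hC : DiscreteRV C) (a : α) (c : γ) :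
    pp2 μ A C a c = ∑ b, pp3 μ A B C a b c := by
  have h := meas_toReal_sum μ hB ((hA a).inter (hC c))
  rw [pp2, h]
  refine Finset.sum_congr rfl fun b _ => ?_
  rw [pp3]
  congr 2
  ext ω
  simp only [Set.mem_inter_iff, Set.mem_preimage]
  tauto

lemma pp2_marg_left (hA : DiscreteRV A) (hB : DiscreteRV B) (hC : DiscreteRV C) (b : β) (c : γ) :
    pp2 μ B C b c = ∑ a, pp3 μ A B C a b c := by
  have h := meas_toReal_sum μ hA ((hB b).inter (hC c))
  rw [pp2, h]
  refine Finset.sum_congr rfl fun a _ => ?_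
  rw [pp3]
  congr 2
  ext ω
  simp only [Set.mem_inter_iff, Set.mem_preimage]
  tauto

lemma pp_sum_one (hC : DiscreteRV C) : ∑ c, pp μ C c = 1 := by
  have h := meas_toReal_sum μ hC MeasurableSet.univ
  simp only [Set.inter_univ, measure_univ, ENNReal.toReal_one] at h
  simpa [pp] using h.symm

lemma cmi_eq_zero_iff (hA : DiscreteRV A) (hB : DiscreteRV B) (hC : DiscreteRV C) :
    cmi μ A B C = 0 ↔ ∀ a b c,
      pp3 μ A B C a b c * pp μ C c = pp2 μ A C a c * pp2 μ B C b c := by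
  have hm1 : ∀ (a : α) (c : γ), pp2 μ A C a c = ∑ b, pp3 μ A B C a b c :=
    fun a c => pp2_marg_mid μ hA hB hC a c
  have hm2 : ∀ (b : β) (c : γ), pp2 μ B C b c = ∑ a, pp3 μ A B C a b c :=
    fun b c => pp2_marg_left μ hA hB hC b c
  have hm3 : ∀ c : γ, pp μ C c = ∑ a, pp2 μ A C a c := fun c => pp_marg μ hA hC c
  have hm3' : ∀ c : γ, pp μ C c = ∑ b, pp2 μ B C b c := fun c => pp_marg μ hB hC c
  have E1 : ent μ (pair A C) = ∑ a, ∑ b, ∑ c, -(pp3 μ A B C a b c * log (pp2 μ A C a c)) := by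
    rw [show (∑ a, ∑ b, ∑ c, -(pp3 μ A B C a b c * log (pp2 μ A C a c)))
        = ∑ a, ∑ c, ∑ b, -(pp3 μ A B C a b c * log (pp2 μ A C a c)) from
      Finset.sum_congr rfl fun a _ => Finset.sum_comm]
    rw [ent_pair_fintype]
    refine Finset.sum_congr rfl fun a _ => Finset.sum_congr rfl fun c _ => ?_
    have h1 : ∑ b, -(pp3 μ A B C a b c * log (pp2 μ A C a c))
        = -((∑ b, pp3 μ A B C a b c) * log (pp2 μ A C a c)) := by
      rw [Finset.sum_neg_distrib, ← Finset.sum_mul]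
    rw [h1, ← hm1 a c]
    simp [negMulLog_eq_neg, pp2]
  have E2 : ent μ (pair B C) = ∑ a, ∑ b, ∑ c, -(pp3 μ A B C a b c * log (pp2 μ B C b c)) := by
    rw [show (∑ a, ∑ b, ∑ c, -(pp3 μ A B C a b c * log (pp2 μ B C b c)))
        = ∑ b, ∑ c, ∑ a, -(pp3 μ A B C a b c * log (pp2 μ B C b c)) from
      (sum_comm3 fun b c a => -(pp3 μ A B C a b c * log (pp2 μ B C b c))).symm]
    rw [ent_pair_fintype]
    refine Finset.sum_congr rfl fun b _ => Finset.sum_congr rfl fun c _ => ?_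
    have h1 : ∑ a, -(pp3 μ A B C a b c * log (pp2 μ B C b c))
        = -((∑ a, pp3 μ A B C a b c) * log (pp2 μ B C b c)) := by
      rw [Finset.sum_neg_distrib, ← Finset.sum_mul]
    rw [h1, ← hm2 b c]
    simp [negMulLog_eq_neg, pp2]
  have E3 : ent μ (pair (pair A B) C) = ∑ a, ∑ b, ∑ c, negMulLog (pp3 μ A B C a b c) := by
    rw [ent_pair_fintype, Fintype.sum_prod_type]
    refine Finset.sum_congr rfl fun a _ => Finset.sum_congr rfl fun b _ =>
      Finset.sum_congr rfl fun c _ => ?_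
    rw [pair_preimage, pp3]
  have E4 : ent μ C = ∑ a, ∑ b, ∑ c, -(pp3 μ A B C a b c * log (pp μ C c)) := by
    rw [show (∑ a, ∑ b, ∑ c, -(pp3 μ A B C a b c * log (pp μ C c)))
        = ∑ c, ∑ a, ∑ b, -(pp3 μ A B C a b c * log (pp μ C c)) from
      sum_comm3 fun a b c => -(pp3 μ A B C a b c * log (pp μ C c))]
    rw [ent_fintype]
    refine Finset.sum_congr rfl fun c _ => ?_
    have h1 : ∀ a, ∑ b, -(pp3 μ A B C a b c * log (pp μ C c))
        = -((∑ b, pp3 μ A B C a b c) * log (pp μ C c)) := by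
      intro a; rw [Finset.sum_neg_distrib, ← Finset.sum_mul]
    rw [Finset.sum_congr rfl fun a _ => h1 a]
    have h2 : ∑ a, -((∑ b, pp3 μ A B C a b c) * log (pp μ C c))
        = -((∑ a, ∑ b, pp3 μ A B C a b c) * log (pp μ C c)) := by
      rw [Finset.sum_neg_distrib, ← Finset.sum_mul]
    rw [h2]
    have h3 : ∑ a, ∑ b, pp3 μ A B C a b c = pp μ C c := by
      rw [hm3 c]
      exact (Finset.sum_congr rfl fun a _ => (hm1 a c).symm)
    rw [h3]
    simp [negMulLog_eq_neg, pp]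
  have hform : cmi μ A B C = ∑ a, ∑ b, ∑ c, pp3 μ A B C a b c *
      ((log (pp3 μ A B C a b c) + log (pp μ C c))
        - (log (pp2 μ A C a c) + log (pp2 μ B C b c))) := by
    rw [cmi, E1, E2, E3, E4]
    simp only [← Finset.sum_add_distrib, ← Finset.sum_sub_distrib]
    refine Finset.sum_congr rfl fun a _ => Finset.sum_congr rfl fun b _ =>
      Finset.sum_congr rfl fun c _ => ?_
    simp only [negMulLog_eq_neg]
    ring
  rw [hform]
  exact kl_aux (pp3 μ A B C) (pp2 μ A C) (pp2 μ B C) (pp μ C)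
    (fun a b c => pp3_nonneg μ A B C a b c) hm1 hm2 hm3 hm3'


lemma pp2_le_right (A : Ω → α) (B : Ω → β) (a b) : pp2 μ A B a b ≤ pp μ B b :=
  ENNReal.toReal_mono (measure_ne_top μ _) (measure_mono Set.inter_subset_right)

lemma pp2_le_left (A : Ω → α) (B : Ω → β) (a b) : pp2 μ A B a b ≤ pp μ A a :=
  ENNReal.toReal_mono (measure_ne_top μ _) (measure_mono Set.inter_subset_left)

lemma pp2_comm (A : Ω → α) (B : Ω → β) (a b) : pp2 μ A B a b = pp2 μ B A b a := by
  rw [pp2, pp2, Set.inter_comm]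

lemma pp2_eq_zero_of_base (A : Ω → α) (B : Ω → β) (a b) (hb : pp μ B b = 0) :
    pp2 μ A B a b = 0 :=
  le_antisymm (hb ▸ pp2_le_right μ A B a b) (pp2_nonneg μ A B a b)

lemma pp2_eq_mul (A : Ω → α) (B : Ω → β) (a b) :
    pp2 μ A B a b = pp2 μ A B a b / pp μ B b * pp μ B b := by
  by_cases hb : pp μ B b = 0
  · rw [pp2_eq_zero_of_base μ A B a b hb, hb]
    simp
  · field_simp

lemma pp2_marg_last (hA : DiscreteRV A) (hB : DiscreteRV B) (hC : DiscreteRV C) (a : α) (b : β) :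
    pp2 μ A B a b = ∑ c, pp3 μ A B C a b c := by
  have h := meas_toReal_sum μ hC ((hA a).inter (hB b))
  rw [pp2, h]
  refine Finset.sum_congr rfl fun c _ => ?_
  rw [pp3]
  congr 2
  rw [Set.inter_comm]

lemma pp3_le_first (A : Ω → α) (B : Ω → β) (C : Ω → γ) (a b c) :
    pp3 μ A B C a b c ≤ pp μ A a :=
  ENNReal.toReal_mono (measure_ne_top μ _)
    (measure_mono (Set.inter_subset_left.trans Set.inter_subset_left))

lemma pp3_le_last (A : Ω → α) (B : Ω → β) (C : Ω → γ) (a b c) :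
    pp3 μ A B C a b c ≤ pp μ C c :=
  ENNReal.toReal_mono (measure_ne_top μ _) (measure_mono Set.inter_subset_right)

lemma pp3_rot (A : Ω → α) (B : Ω → β) (C : Ω → γ) (a b c) :
    pp3 μ C A B c a b = pp3 μ A B C a b c := by
  rw [pp3, pp3]
  congr 2
  ext ω
  simp only [Set.mem_inter_iff, Set.mem_preimage]
  tauto

lemma pp3_swap12 (A : Ω → α) (B : Ω → β) (C : Ω → γ) (a b c) :
    pp3 μ A B C a b c = pp3 μ B A C b a c := by
  rw [pp3, pp3]
  congr 2
  ext ω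
  simp only [Set.mem_inter_iff, Set.mem_preimage]
  tauto

end Marginals

/-- The conditional-distribution kernel of `Y` given `X`. -/
noncomputable def ck {𝒳 𝒴 : Type*} (μ : Measure Ω) (X : Ω → 𝒳) (Y : Ω → 𝒴) (x : 𝒳) :
    𝒴 → ℝ := fun y => pp2 μ Y X y x / pp μ X x

lemma condDist_eq_comp {𝒳 𝒴 : Type*} (μ : Measure Ω) (X : Ω → 𝒳) (Y : Ω → 𝒴) :
    condDist μ X Y = ck μ X Y ∘ X := by
  funext ω
  funext y
  have h1 : {ω' | Y ω' = y ∧ X ω' = X ω} = Y ⁻¹' {y} ∩ X ⁻¹' {X ω} := by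
    ext ω'; simp [Set.mem_inter_iff]
  have h2 : {ω' | X ω' = X ω} = X ⁻¹' {X ω} := rfl
  simp only [condDist, Function.comp_apply, ck, pp2, pp, h1, h2]

lemma ck_apply {𝒳 𝒴 : Type*} (μ : Measure Ω) (X : Ω → 𝒳) (Y : Ω → 𝒴) (x : 𝒳) (y : 𝒴) :
    ck μ X Y x y = pp2 μ Y X y x / pp μ X x := rfl

section Construct

variable {𝒳 𝒴 : Type} [Fintype 𝒳] [Fintype 𝒴]
variable (μ : Measure Ω) [IsProbabilityMeasure μ]
variable {X : Ω → 𝒳} {Y : Ω → 𝒴}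

lemma construct (hX : DiscreteRV X) (hY : DiscreteRV Y)
    (h : condEnt μ (condDist μ X Y) (condDist μ Y X) = 0) : IsTrivialPair μ X Y := by
  classical
  set f : 𝒳 → 𝒴 → ℝ := ck μ X Y with hf
  set g : 𝒴 → 𝒳 → ℝ := ck μ Y X with hg
  haveI : Fintype (Set.range f) := Set.fintypeRange f
  haveI : Fintype (Set.range g) := Set.fintypeRange g
  set F : 𝒳 → Set.range f := Set.rangeFactorization f with hF
  set G : 𝒴 → Set.range g := Set.rangeFactorization g with hG
  set Z : Ω → Set.range f := F ∘ X with hZ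
  set W : Ω → Set.range g := G ∘ Y with hW
  have hZd : DiscreteRV Z := hX.comp F
  have hWd : DiscreteRV W := hY.comp G
  have hval : ∀ x, (F x : 𝒴 → ℝ) = f x := fun x => rfl
  have hvalg : ∀ y, (G y : 𝒳 → ℝ) = g y := fun y => rfl
  have htrans : condEnt μ (condDist μ X Y) (condDist μ Y X) = condEnt μ Z W := by
    rw [condEnt, condEnt]
    congr 1
    · refine ent_congr μ (Prod.map (Subtype.val) (Subtype.val)) ?_ ?_
      · exact Function.Injective.prodMap Subtype.val_injective Subtype.val_injective
      · intro ω
        rw [condDist_eq_comp μ X Y, condDist_eq_comp μ Y X]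
        rfl
    · refine ent_congr μ Subtype.val Subtype.val_injective ?_
      intro ω
      rw [condDist_eq_comp μ Y X]
      rfl
  rw [htrans] at h
  have hDet := (condEnt_eq_zero_iff μ hZd hWd).1 h
  refine ⟨Set.range f, inferInstance, Z, hZd, ?_, ?_, ?_⟩
  · -- cmi μ X Y Z = 0 : sufficiency of the statistic, holds unconditionally
    rw [cmi_eq_zero_iff μ hX hY hZd]
    intro x y s
    by_cases hxs : F x = s
    · have hXsub : X ⁻¹' {x} ⊆ Z ⁻¹' {s} := by
        intro ω hω
        simp only [Set.mem_preimage, Set.mem_singleton_iff] at hω ⊢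
        rw [hZ]
        simp [Function.comp_apply, hω, hxs]
      have h3 : pp3 μ X Y Z x y s = pp2 μ X Y x y := by
        rw [pp3, pp2]
        congr 1
        rw [Set.inter_eq_left.2
          (fun ω (hω : ω ∈ X ⁻¹' {x} ∩ Y ⁻¹' {y}) => hXsub hω.1)]
      have h2 : pp2 μ X Z x s = pp μ X x := by
        rw [pp2, pp]
        congr 1
        rw [Set.inter_eq_left.2 hXsub]
      have hYZ : pp2 μ Y Z y s = ∑ x'' ∈ Finset.univ.filter (fun x'' => F x'' = s),
          pp2 μ Y X y x'' := by
        rw [pp2_comm, pp2, hZ, meas_comp_inter μ hX F s (hY y),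
          ENNReal.toReal_sum (fun _ _ => measure_ne_top μ _)]
        refine Finset.sum_congr rfl fun x'' _ => ?_
        rw [pp2, Set.inter_comm]
      have hZm : pp μ Z s = ∑ x'' ∈ Finset.univ.filter (fun x'' => F x'' = s),
          pp μ X x'' := by
        rw [pp, hZ]
        have h4 := meas_comp_inter μ hX F s MeasurableSet.univ
        simp only [Set.inter_univ] at h4
        rw [h4, ENNReal.toReal_sum (fun _ _ => measure_ne_top μ _)]
        rfl
      have hfx : ∀ x'' ∈ Finset.univ.filter (fun x'' => F x'' = s), f x'' = f x := by
        intro x'' hx''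
        have h1 : F x'' = F x := by
          rw [Finset.mem_filter] at hx''
          rw [hx''.2, hxs]
        calc f x'' = (F x'' : 𝒴 → ℝ) := (hval x'').symm
        _ = (F x : 𝒴 → ℝ) := by rw [h1]
        _ = f x := hval x
      have hYZ2 : pp2 μ Y Z y s = f x y * pp μ Z s := by
        rw [hYZ, hZm, Finset.mul_sum]
        refine Finset.sum_congr rfl fun x'' hx'' => ?_
        rw [pp2_eq_mul μ Y X y x'',
          show pp2 μ Y X y x'' / pp μ X x'' = f x'' y from rfl, hfx x'' hx'']
      have hXY : pp2 μ X Y x y = f x y * pp μ X x := by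
        rw [pp2_comm, pp2_eq_mul μ Y X y x,
          show pp2 μ Y X y x / pp μ X x = f x y from rfl]
      rw [h3, h2, hYZ2, hXY]
      ring
    · have hdisj : μ (X ⁻¹' {x} ∩ Z ⁻¹' {s}) = 0 := by
        have he : X ⁻¹' {x} ∩ Z ⁻¹' {s} = ∅ := by
          ext ω
          simp only [Set.mem_inter_iff, Set.mem_preimage, Set.mem_singleton_iff,
            Set.mem_empty_iff_false, iff_false, not_and]
          intro h1 h2
          apply hxs
          rw [hZ] at h2
          simp only [Function.comp_apply] at h2
          rw [← h2, h1]
        rw [he]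
        exact measure_empty
      have h3 : pp3 μ X Y Z x y s = 0 := by
        have := measure_mono_null (fun ω (hω : ω ∈ X ⁻¹' {x} ∩ Y ⁻¹' {y} ∩ Z ⁻¹' {s}) =>
          (⟨hω.1.1, hω.2⟩ : ω ∈ X ⁻¹' {x} ∩ Z ⁻¹' {s})) hdisj
        simp [pp3, this]
      have h2 : pp2 μ X Z x s = 0 := by simp [pp2, hdisj]
      rw [h3, h2]
      ring
  · -- cmi μ Z X Y = 0
    have hent : ent μ (pair (pair Z X) Y) = ent μ (pair X Y) := by
      refine ent_congr μ (fun p : 𝒳 × 𝒴 => ((F p.1, p.1), p.2)) ?_ fun ω => rfl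
      intro p q hpq
      simp only [Prod.mk.injEq] at hpq
      exact Prod.ext hpq.1.2 hpq.2
    have hcmi : cmi μ Z X Y = condEnt μ Z Y := by
      rw [cmi, condEnt, hent]
      ring
    rw [hcmi, condEnt_eq_zero_iff μ hZd hY]
    intro s y'
    by_cases h0 : μ (Z ⁻¹' {s} ∩ Y ⁻¹' {y'}) = 0
    · exact Or.inl h0
    right
    have hsubW : Y ⁻¹' {y'} ⊆ W ⁻¹' {G y'} := by
      intro ω hω
      simp only [Set.mem_preimage, Set.mem_singleton_iff] at hω ⊢
      rw [hW]
      simp [hω]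
    have h1 : μ (Z ⁻¹' {s} ∩ W ⁻¹' {G y'}) ≠ 0 := by
      intro hc
      exact h0 (measure_mono_null (Set.inter_subset_inter_right _ hsubW) hc)
    have h2 : μ (Z ⁻¹' {s} ∩ W ⁻¹' {G y'}) = μ (W ⁻¹' {G y'}) :=
      (hDet s (G y')).resolve_left h1
    have h3 : μ (W ⁻¹' {G y'} \ Z ⁻¹' {s}) = 0 := by
      have h4 := measure_inter_add_diff (μ := μ) (W ⁻¹' {G y'}) (hZd s)
      rw [Set.inter_comm] at h2
      rw [h2] at h4
      have hne : μ (W ⁻¹' {G y'}) ≠ ⊤ := measure_ne_top μ _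
      nth_rewrite 2 [← add_zero (μ (W ⁻¹' {G y'}))] at h4
      exact (ENNReal.add_right_inj hne).1 h4
    have h5 : μ (Y ⁻¹' {y'} \ Z ⁻¹' {s}) = 0 :=
      measure_mono_null (fun ω (hω : ω ∈ Y ⁻¹' {y'} \ Z ⁻¹' {s}) =>
        (⟨hsubW hω.1, hω.2⟩ : ω ∈ W ⁻¹' {G y'} \ Z ⁻¹' {s})) h3
    have h6 := measure_inter_add_diff (μ := μ) (Y ⁻¹' {y'}) (hZd s)
    rw [h5, add_zero] at h6
    rw [Set.inter_comm]
    exact h6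
  · -- cmi μ Z Y X = 0
    have h1 : ent μ (pair Z X) = ent μ X := by
      refine ent_congr μ (fun x => (F x, x)) ?_ fun ω => rfl
      intro a b hab
      simp only [Prod.mk.injEq] at hab
      exact hab.2
    have h2 : ent μ (pair (pair Z Y) X) = ent μ (pair Y X) := by
      refine ent_congr μ (fun p : 𝒴 × 𝒳 => ((F p.2, p.1), p.2)) ?_ fun ω => rfl
      intro p q hpq
      simp only [Prod.mk.injEq] at hpq
      exact Prod.ext hpq.1.2 hpq.2
    rw [cmi, h1, h2]
    ring

lemma main (hX : DiscreteRV X) (hY : DiscreteRV Y) (h : IsTrivialPair μ X Y) :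
    condEnt μ (condDist μ X Y) (condDist μ Y X) = 0 := by
  classical
  obtain ⟨𝒵, hfin, Z, hZd, hc1, hc2, hc3⟩ := h
  set f : 𝒳 → 𝒴 → ℝ := ck μ X Y with hf
  set g : 𝒴 → 𝒳 → ℝ := ck μ Y X with hg
  -- conditional independence relations
  have CI3 : ∀ x y z, pp3 μ X Y Z x y z * pp μ Z z = pp2 μ X Z x z * pp2 μ Y Z y z :=
    (cmi_eq_zero_iff μ hX hY hZd).1 hc1
  have CI1 : ∀ x y z, pp3 μ X Y Z x y z * pp μ Y y = pp2 μ Y Z y z * pp2 μ X Y x y := by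
    intro x y z
    have h0 := (cmi_eq_zero_iff μ hZd hX hY).1 hc2 z x y
    rw [pp3_rot μ X Y Z x y z] at h0
    rw [h0, pp2_comm μ Z Y z y]
  have CI2 : ∀ x y z, pp3 μ X Y Z x y z * pp μ X x = pp2 μ X Z x z * pp2 μ X Y x y := by
    intro x y z
    have h0 := (cmi_eq_zero_iff μ hZd hY hX).1 hc3 z y x
    rw [pp3_rot μ Y X Z y x z, pp3_swap12 μ Y X Z y x z] at h0
    rw [h0, pp2_comm μ Z X z x, pp2_comm μ Y X y x]
  -- kernels
  have hq : ∀ x y, pp2 μ X Y x y = f x y * pp μ X x := by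
    intro x y
    rw [pp2_comm, pp2_eq_mul μ Y X y x]
    rfl
  have hr : ∀ x y, pp2 μ X Y x y = g y x * pp μ Y y := by
    intro x y
    rw [pp2_eq_mul μ X Y x y]
    rfl
  -- Step A
  have hA : ∀ x y, 0 < pp2 μ X Y x y → ∀ z,
      pp2 μ X Z x z * pp μ Y y = pp2 μ Y Z y z * pp μ X x := by
    intro x y hpos z
    by_cases hP : pp3 μ X Y Z x y z = 0
    · have e1 := CI1 x y z
      have e2 := CI2 x y z
      rw [hP, zero_mul] at e1 e2
      have hyz : pp2 μ Y Z y z = 0 := by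
        rcases mul_eq_zero.1 e1.symm with h' | h'
        · exact h'
        · exact absurd h' (ne_of_gt hpos)
      have hxz : pp2 μ X Z x z = 0 := by
        rcases mul_eq_zero.1 e2.symm with h' | h'
        · exact h'
        · exact absurd h' (ne_of_gt hpos)
      rw [hyz, hxz]
      ring
    · have e1 := CI1 x y z
      have e2 := CI2 x y z
      have h3 : pp2 μ X Z x z * pp μ Y y * pp2 μ X Y x y
          = pp2 μ Y Z y z * pp μ X x * pp2 μ X Y x y := by
        linear_combination pp μ X x * e1 - pp μ Y y * e2
      exact mul_right_cancel₀ (ne_of_gt hpos) h3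
  -- Step B
  have hB : ∀ y z, pp2 μ Y Z y z =
      (∑ x'', if pp μ X x'' = 0 then 0 else g y x'' * (pp2 μ X Z x'' z / pp μ X x''))
        * pp μ Y y := by
    intro y z
    rw [pp2_marg_left μ hX hY hZd y z, Finset.sum_mul]
    refine Finset.sum_congr rfl fun x'' _ => ?_
    by_cases hx : pp μ X x'' = 0
    · rw [if_pos hx, zero_mul]
      exact le_antisymm (hx ▸ pp3_le_first μ X Y Z x'' y z) (pp3_nonneg μ X Y Z x'' y z)
    · rw [if_neg hx]
      have e2 := CI2 x'' y z
      have hP : pp3 μ X Y Z x'' y z = pp2 μ X Z x'' z * pp2 μ X Y x'' y / pp μ X x'' := by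
        rw [eq_div_iff hx]
        linear_combination e2
      rw [hP, hr x'' y]
      ring
  have hB' : ∀ y z, 0 < pp μ Y y → pp2 μ Y Z y z / pp μ Y y =
      ∑ x'', if pp μ X x'' = 0 then 0 else g y x'' * (pp2 μ X Z x'' z / pp μ X x'') := by
    intro y z hy
    rw [hB y z, mul_div_assoc, div_self (ne_of_gt hy), mul_one]
  have hBB : ∀ y y' z, g y = g y' → 0 < pp μ Y y → 0 < pp μ Y y' →
      pp2 μ Y Z y z / pp μ Y y = pp2 μ Y Z y' z / pp μ Y y' := by
    intro y y' z hgg hy hy'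
    rw [hB' y z hy, hB' y' z hy', hgg]
  -- Step C
  have hC : ∀ x y₀, pp2 μ X Y x y₀ =
      ∑ z, (if pp μ Z z = 0 then 0 else pp2 μ X Z x z * (pp2 μ Y Z y₀ z / pp μ Z z)) := by
    intro x y₀
    rw [pp2_marg_last μ hX hY hZd x y₀]
    refine Finset.sum_congr rfl fun z _ => ?_
    by_cases hz : pp μ Z z = 0
    · rw [if_pos hz]
      exact le_antisymm (hz ▸ pp3_le_last μ X Y Z x y₀ z) (pp3_nonneg μ X Y Z x y₀ z)
    · rw [if_neg hz]
      have e3 := CI3 x y₀ z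
      have hP : pp3 μ X Y Z x y₀ z = pp2 μ X Z x z * pp2 μ Y Z y₀ z / pp μ Z z := by
        rw [eq_div_iff hz]
        linear_combination e3
      rw [hP]
      ring
  -- the key determinism property
  have key : ∀ x y x' y', 0 < pp2 μ X Y x y → 0 < pp2 μ X Y x' y' → g y = g y' →
      f x = f x' := by
    intro x y x' y' hxy hxy' hgg
    have hpx : 0 < pp μ X x := lt_of_lt_of_le hxy (pp2_le_left μ X Y x y)
    have hpx' : 0 < pp μ X x' := lt_of_lt_of_le hxy' (pp2_le_left μ X Y x' y')
    have hpy : 0 < pp μ Y y := lt_of_lt_of_le hxy (pp2_le_right μ X Y x y)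
    have hpy' : 0 < pp μ Y y' := lt_of_lt_of_le hxy' (pp2_le_right μ X Y x' y')
    funext y₀
    have hform : ∀ x1 y1, 0 < pp2 μ X Y x1 y1 → f x1 y₀ =
        ∑ z, (if pp μ Z z = 0 then 0
          else (pp2 μ Y Z y1 z / pp μ Y y1) * (pp2 μ Y Z y₀ z / pp μ Z z)) := by
      intro x1 y1 hx1y1
      have hx1 : 0 < pp μ X x1 := lt_of_lt_of_le hx1y1 (pp2_le_left μ X Y x1 y1)
      have hy1 : 0 < pp μ Y y1 := lt_of_lt_of_le hx1y1 (pp2_le_right μ X Y x1 y1)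
      have h1 : f x1 y₀ = pp2 μ X Y x1 y₀ / pp μ X x1 := by
        rw [hq x1 y₀, mul_div_assoc, div_self (ne_of_gt hx1), mul_one]
      rw [h1, hC x1 y₀, Finset.sum_div]
      refine Finset.sum_congr rfl fun z _ => ?_
      by_cases hz : pp μ Z z = 0
      · simp [hz]
      · rw [if_neg hz, if_neg hz]
        have hAz := hA x1 y1 hx1y1 z
        have hdiv : pp2 μ X Z x1 z / pp μ X x1 = pp2 μ Y Z y1 z / pp μ Y y1 := by
          rw [div_eq_div_iff (ne_of_gt hx1) (ne_of_gt hy1)]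
          exact hAz
        rw [← hdiv]
        ring
    rw [hform x y hxy, hform x' y' hxy']
    refine Finset.sum_congr rfl fun z _ => ?_
    by_cases hz : pp μ Z z = 0
    · simp [hz]
    · rw [if_neg hz, if_neg hz, hBB y y' z hgg hpy hpy']
  -- transport and conclude
  haveI : Fintype (Set.range f) := Set.fintypeRange f
  haveI : Fintype (Set.range g) := Set.fintypeRange g
  set F : 𝒳 → Set.range f := Set.rangeFactorization f with hF
  set G : 𝒴 → Set.range g := Set.rangeFactorization g with hG
  have hval : ∀ x, (F x : 𝒴 → ℝ) = f x := fun x => rfl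
  have hvalg : ∀ y, (G y : 𝒳 → ℝ) = g y := fun y => rfl
  have hFd : DiscreteRV (F ∘ X) := hX.comp F
  have hGd : DiscreteRV (G ∘ Y) := hY.comp G
  have htrans : condEnt μ (condDist μ X Y) (condDist μ Y X) = condEnt μ (F ∘ X) (G ∘ Y) := by
    rw [condEnt, condEnt]
    congr 1
    · refine ent_congr μ (Prod.map (Subtype.val) (Subtype.val)) ?_ ?_
      · exact Function.Injective.prodMap Subtype.val_injective Subtype.val_injective
      · intro ω
        rw [condDist_eq_comp μ X Y, condDist_eq_comp μ Y X]
        rfl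
    · refine ent_congr μ Subtype.val Subtype.val_injective ?_
      intro ω
      rw [condDist_eq_comp μ Y X]
      rfl
  rw [htrans, condEnt_eq_zero_iff μ hFd hGd]
  intro a b
  by_cases h0 : μ ((F ∘ X) ⁻¹' {a} ∩ (G ∘ Y) ⁻¹' {b}) = 0
  · exact Or.inl h0
  right
  have hBmeas : MeasurableSet ((G ∘ Y) ⁻¹' {b}) := hGd b
  have hE1 : μ ((F ∘ X) ⁻¹' {a} ∩ (G ∘ Y) ⁻¹' {b})
      = ∑ x ∈ Finset.univ.filter (fun x => F x = a),
          ∑ y ∈ Finset.univ.filter (fun y => G y = b), μ (X ⁻¹' {x} ∩ Y ⁻¹' {y}) := by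
    rw [meas_comp_inter μ hX F a hBmeas]
    refine Finset.sum_congr rfl fun x _ => ?_
    rw [Set.inter_comm, meas_comp_inter μ hY G b (hX x)]
    exact Finset.sum_congr rfl fun y _ => by rw [Set.inter_comm]
  have hE2 : μ ((G ∘ Y) ⁻¹' {b})
      = ∑ x, ∑ y ∈ Finset.univ.filter (fun y => G y = b), μ (X ⁻¹' {x} ∩ Y ⁻¹' {y}) := by
    have h1 := meas_biUnion_inter μ hX Finset.univ hBmeas
    rw [show (⋃ x ∈ (Finset.univ : Finset 𝒳), X ⁻¹' {x}) = Set.univ from by ext; simp,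
      Set.univ_inter] at h1
    rw [h1]
    refine Finset.sum_congr rfl fun x _ => ?_
    rw [Set.inter_comm, meas_comp_inter μ hY G b (hX x)]
    exact Finset.sum_congr rfl fun y _ => by rw [Set.inter_comm]
  rw [hE1] at h0
  obtain ⟨x₀, hx₀mem, hx₀⟩ := Finset.exists_ne_zero_of_sum_ne_zero h0
  obtain ⟨y₀, hy₀mem, hy₀⟩ := Finset.exists_ne_zero_of_sum_ne_zero hx₀
  rw [Finset.mem_filter] at hx₀mem hy₀mem
  have hx₀a : F x₀ = a := hx₀mem.2
  have hy₀b : G y₀ = b := hy₀mem.2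
  have hpos₀ : 0 < pp2 μ X Y x₀ y₀ :=
    ENNReal.toReal_pos hy₀ (measure_ne_top μ _)
  rw [hE1, hE2]
  refine Finset.sum_subset (Finset.subset_univ _) ?_
  intro x _ hxa
  refine Finset.sum_eq_zero fun y hy => ?_
  by_contra hne
  rw [Finset.mem_filter] at hy hxa
  have hpos : 0 < pp2 μ X Y x y := ENNReal.toReal_pos hne (measure_ne_top μ _)
  have hgg : g y = g y₀ := by
    rw [← hvalg y, ← hvalg y₀, hy.2, hy₀b]
  have hffx : f x = f x₀ := key x y x₀ y₀ hpos hpos₀ hgg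
  have : F x = a := by
    rw [← hx₀a]
    exact Subtype.ext (by rw [hval x, hval x₀, hffx])
  exact hxa ⟨Finset.mem_univ x, this⟩

lemma trivial_symm {𝒳' 𝒴' : Type*} {X' : Ω → 𝒳'} {Y' : Ω → 𝒴'}
    (h : IsTrivialPair μ X' Y') : IsTrivialPair μ Y' X' := by
  obtain ⟨𝒵, hfin, Z, hZ, h1, h2, h3⟩ := h
  refine ⟨𝒵, hfin, Z, hZ, ?_, h3, h2⟩
  have he : ent μ (pair (pair Y' X') Z) = ent μ (pair (pair X' Y') Z) := by
    refine ent_congr μ (fun p : (𝒳' × 𝒴') × 𝒵 => ((p.1.2, p.1.1), p.2)) ?_ fun ω => rfl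
    intro p q hpq
    simp only [Prod.mk.injEq] at hpq
    exact Prod.ext (Prod.ext hpq.1.2 hpq.1.1) hpq.2
  have : cmi μ Y' X' Z = cmi μ X' Y' Z := by
    rw [cmi, cmi, he]
    ring
  rw [this]
  exact h1

end Construct

/-- With `X̃ = (conditional distribution of Y given X = X(·))` and
`Ỹ = (conditional distribution of X given Y = Y(·))`, the following are equivalent:
(i) the pair `(X,Y)` is trivial; (ii) `H[X̃ | Ỹ] = 0`; (iii) `H[Ỹ | X̃] = 0`. -/
theorem stmt3 {Ω : Type*} [MeasurableSpace Ω] (μ : Measure Ω) [IsProbabilityMeasure μ]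
    {𝒳 𝒴 : Type} [Fintype 𝒳] [Fintype 𝒴] [Nonempty 𝒳] [Nonempty 𝒴]
    (X : Ω → 𝒳) (Y : Ω → 𝒴) (hX : DiscreteRV X) (hY : DiscreteRV Y) :
    [IsTrivialPair μ X Y,
      condEnt μ (condDist μ X Y) (condDist μ Y X) = 0,
      condEnt μ (condDist μ Y X) (condDist μ X Y) = 0].TFAE := by
  tfae_have 1 → 2 := fun h => main μ hX hY h
  tfae_have 2 → 1 := fun h => construct μ hX hY h
  tfae_have 1 → 3 := fun h => main μ hY hX (trivial_symm μ h)
  tfae_have 3 → 1 := fun h => trivial_symm μ (construct μ hY hX h)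
  tfae_finish

end SecureComputation
end

section
/- Let R and S be finite-valued random variables on a probability space such that the pair (R,S) is trivial, and let f and g be deterministic functions on the ranges of R and S respectively. Then the pair (⟨R, g ∘ S⟩, ⟨S, f ∘ R⟩) is trivial. -/
open MeasureTheory Real
open scoped ENNReal

namespace SecureComputation

variable {Ω : Type*} [MeasurableSpace Ω]

/-! ### Auxiliary lemmas -/

section Aux

lemma discrete_pair {𝒳 𝒴 : Type*} {X : Ω → 𝒳} {Y : Ω → 𝒴}
    (hX : DiscreteRV X) (hY : DiscreteRV Y) : DiscreteRV (pair X Y) := by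
  rintro ⟨x, y⟩
  have h : pair X Y ⁻¹' {(x, y)} = X ⁻¹' {x} ∩ Y ⁻¹' {y} := by
    ext ω; simp [pair, Prod.ext_iff]
  rw [h]
  exact (hX x).inter (hY y)

lemma discrete_comp {𝒳 𝒴 : Type*} [Fintype 𝒳] {X : Ω → 𝒳} (hX : DiscreteRV X)
    (φ : 𝒳 → 𝒴) : DiscreteRV (fun ω => φ (X ω)) := by
  intro y
  have h : (fun ω => φ (X ω)) ⁻¹' {y} = ⋃ x ∈ {x : 𝒳 | φ x = y}, X ⁻¹' {x} := by
    ext ω; simp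
  rw [h]
  exact MeasurableSet.biUnion (Set.to_countable _) (fun x _ => hX x)

lemma ent_comp_inj_s7 {𝒳 𝒴 : Type*} [Fintype 𝒳] [Fintype 𝒴] (μ : Measure Ω)
    (X : Ω → 𝒳) (e : 𝒳 → 𝒴) (he : Function.Injective e) :
    ent μ (fun ω => e (X ω)) = ent μ X := by
  classical
  rw [ent, ent, tsum_fintype, tsum_fintype]
  have h0 : ∀ y ∈ Finset.univ, y ∉ Finset.univ.image e →
      negMulLog ((μ ((fun ω => e (X ω)) ⁻¹' {y})).toReal) = 0 := by
    intro y _ hy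
    have h : (fun ω => e (X ω)) ⁻¹' {y} = ∅ := by
      ext ω
      simp only [Set.mem_preimage, Set.mem_singleton_iff, Set.mem_empty_iff_false, iff_false]
      intro hxy
      exact hy (Finset.mem_image.2 ⟨X ω, Finset.mem_univ _, hxy⟩)
    rw [h]
    simp
  calc ∑ y : 𝒴, negMulLog ((μ ((fun ω => e (X ω)) ⁻¹' {y})).toReal)
      = ∑ y ∈ Finset.univ.image e,
          negMulLog ((μ ((fun ω => e (X ω)) ⁻¹' {y})).toReal) :=
        (Finset.sum_subset (Finset.subset_univ _) h0).symm
    _ = ∑ x : 𝒳, negMulLog ((μ ((fun ω => e (X ω)) ⁻¹' {e x})).toReal) :=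
        Finset.sum_image (fun a _ b _ h => he h)
    _ = ∑ x : 𝒳, negMulLog ((μ (X ⁻¹' {x})).toReal) := by
        refine Finset.sum_congr rfl fun x _ => ?_
        have h : (fun ω => e (X ω)) ⁻¹' {e x} = X ⁻¹' {x} := by
          ext ω; simp [he.eq_iff]
        rw [h]

lemma ent_congr_s7 {𝒳 𝒴 : Type*} [Fintype 𝒳] [Fintype 𝒴] (μ : Measure Ω)
    {X : Ω → 𝒳} {Y : Ω → 𝒴} (u : 𝒳 → 𝒴) (v : 𝒴 → 𝒳)
    (hu : ∀ ω, Y ω = u (X ω)) (hv : ∀ ω, X ω = v (Y ω)) :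
    ent μ X = ent μ Y := by
  have h1 : ent μ (pair X Y) = ent μ X := by
    have h : pair X Y = fun ω => (fun x => (x, u x)) (X ω) := by
      funext ω; simp only [pair]; rw [hu ω]
    rw [h]
    exact ent_comp_inj_s7 μ X (fun x => (x, u x)) (fun a b h => (Prod.ext_iff.1 h).1)
  have h2 : ent μ (pair X Y) = ent μ Y := by
    have h : pair X Y = fun ω => (fun y => (v y, y)) (Y ω) := by
      funext ω; simp only [pair]; rw [← hv ω]
    rw [h]
    exact ent_comp_inj_s7 μ Y (fun y => (v y, y)) (fun a b h => (Prod.ext_iff.1 h).2)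
  rw [← h1, h2]

lemma negMulLog_sum {ι : Type*} [Fintype ι] (f : ι → ℝ) (c : ℝ) (h : c = ∑ i, f i) :
    negMulLog c = ∑ i, -(f i * log c) := by
  rw [Finset.sum_neg_distrib, ← Finset.sum_mul, ← h, negMulLog, neg_mul]

lemma pointwise_bound {p a b c : ℝ} (hp : 0 ≤ p) (hpa : p ≤ a) (hpb : p ≤ b)
    (hac : a ≤ c) (hbc : b ≤ c) :
    p * (log a + log b - log p - log c) ≤ a * b / c - p := by
  rcases eq_or_lt_of_le hp with h0 | h0
  · rw [← h0]
    have ha : 0 ≤ a := le_trans hp hpa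
    have hb : 0 ≤ b := le_trans hp hpb
    have hc : 0 ≤ c := le_trans ha hac
    have hd : 0 ≤ a * b / c := div_nonneg (mul_nonneg ha hb) hc
    simpa using hd
  · have ha : 0 < a := lt_of_lt_of_le h0 hpa
    have hb : 0 < b := lt_of_lt_of_le h0 hpb
    have hc : 0 < c := lt_of_lt_of_le ha hac
    have hr : 0 < a * b / c := by positivity
    have hlog : log a + log b - log p - log c = log (a * b / c / p) := by
      rw [log_div (ne_of_gt hr) (ne_of_gt h0), log_div (by positivity) (ne_of_gt hc),
        log_mul (ne_of_gt ha) (ne_of_gt hb)]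
      ring
    rw [hlog]
    have hle := log_le_sub_one_of_pos (div_pos hr h0)
    calc p * log (a * b / c / p) ≤ p * (a * b / c / p - 1) :=
          mul_le_mul_of_nonneg_left hle hp
      _ = a * b / c - p := by field_simp

lemma key_ineq {𝒳 𝒴 𝒵 : Type*} [Fintype 𝒳] [Fintype 𝒴] [Fintype 𝒵]
    (q : 𝒳 → 𝒴 → 𝒵 → ℝ) (A : 𝒳 → 𝒵 → ℝ) (B : 𝒴 → 𝒵 → ℝ) (Q : 𝒵 → ℝ)
    (hq : ∀ x y z, 0 ≤ q x y z)
    (hA : ∀ x z, A x z = ∑ y, q x y z)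
    (hB : ∀ y z, B y z = ∑ x, q x y z)
    (hQA : ∀ z, Q z = ∑ x, A x z)
    (hQB : ∀ z, Q z = ∑ y, B y z)
    (hsum : ∑ z, Q z = 1) :
    (∑ x, ∑ y, ∑ z, negMulLog (q x y z)) + ∑ z, negMulLog (Q z)
      ≤ (∑ x, ∑ z, negMulLog (A x z)) + ∑ y, ∑ z, negMulLog (B y z) := by
  classical
  have hA0 : ∀ x z, 0 ≤ A x z := fun x z => (hA x z) ▸ Finset.sum_nonneg fun y _ => hq x y z
  have hB0 : ∀ y z, 0 ≤ B y z := fun y z => (hB y z) ▸ Finset.sum_nonneg fun x _ => hq x y z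
  have hQ0 : ∀ z, 0 ≤ Q z := fun z => (hQA z) ▸ Finset.sum_nonneg fun x _ => hA0 x z
  have hqA : ∀ x y z, q x y z ≤ A x z := fun x y z => (hA x z) ▸
    Finset.single_le_sum (fun y _ => hq x y z) (Finset.mem_univ y)
  have hqB : ∀ x y z, q x y z ≤ B y z := fun x y z => (hB y z) ▸
    Finset.single_le_sum (fun x _ => hq x y z) (Finset.mem_univ x)
  have hAQ : ∀ x z, A x z ≤ Q z := fun x z => (hQA z) ▸
    Finset.single_le_sum (fun x _ => hA0 x z) (Finset.mem_univ x)
  have hBQ : ∀ y z, B y z ≤ Q z := fun y z => (hQB z) ▸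
    Finset.single_le_sum (fun y _ => hB0 y z) (Finset.mem_univ y)
  -- rewrite entropies as triple sums
  have eq_q : ∑ x, ∑ y, ∑ z, negMulLog (q x y z)
      = ∑ x, ∑ y, ∑ z, -(q x y z * log (q x y z)) := by
    refine Finset.sum_congr rfl fun x _ => Finset.sum_congr rfl fun y _ =>
      Finset.sum_congr rfl fun z _ => ?_
    rw [negMulLog, neg_mul]
  have eq_A : ∑ x, ∑ z, negMulLog (A x z) = ∑ x, ∑ y, ∑ z, -(q x y z * log (A x z)) := by
    refine Finset.sum_congr rfl fun x _ => ?_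
    exact (Finset.sum_congr rfl fun z _ =>
      negMulLog_sum (fun y => q x y z) _ (hA x z)).trans Finset.sum_comm
  have eq_B : ∑ y, ∑ z, negMulLog (B y z) = ∑ x, ∑ y, ∑ z, -(q x y z * log (B y z)) := by
    calc ∑ y, ∑ z, negMulLog (B y z)
        = ∑ y, ∑ x, ∑ z, -(q x y z * log (B y z)) := by
          refine Finset.sum_congr rfl fun y _ => ?_
          exact (Finset.sum_congr rfl fun z _ =>
            negMulLog_sum (fun x => q x y z) _ (hB y z)).trans Finset.sum_comm
      _ = ∑ x, ∑ y, ∑ z, -(q x y z * log (B y z)) := Finset.sum_comm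
  have eq_Q : ∑ z, negMulLog (Q z) = ∑ x, ∑ y, ∑ z, -(q x y z * log (Q z)) := by
    have h1 : ∀ z, negMulLog (Q z) = ∑ x, ∑ y, -(q x y z * log (Q z)) := by
      intro z
      calc negMulLog (Q z) = ∑ x, -(A x z * log (Q z)) :=
            negMulLog_sum (fun x => A x z) _ (hQA z)
        _ = ∑ x, ∑ y, -(q x y z * log (Q z)) := by
            refine Finset.sum_congr rfl fun x _ => ?_
            rw [hA, Finset.sum_mul, ← Finset.sum_neg_distrib]
    calc ∑ z, negMulLog (Q z)
        = ∑ z, ∑ x, ∑ y, -(q x y z * log (Q z)) :=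
          Finset.sum_congr rfl fun z _ => h1 z
      _ = ∑ x, ∑ z, ∑ y, -(q x y z * log (Q z)) := Finset.sum_comm
      _ = ∑ x, ∑ y, ∑ z, -(q x y z * log (Q z)) :=
          Finset.sum_congr rfl fun x _ => Finset.sum_comm
  -- total mass
  have hsumq : ∑ x, ∑ y, ∑ z, q x y z = 1 := by
    have h1 : ∑ z, Q z = ∑ z, ∑ x, ∑ y, q x y z := by
      refine Finset.sum_congr rfl fun z _ => ?_
      rw [hQA]
      exact Finset.sum_congr rfl fun x _ => hA x z
    have h2 : ∑ z, ∑ x, ∑ y, q x y z = ∑ x, ∑ z, ∑ y, q x y z := Finset.sum_comm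
    have h3 : ∑ x, ∑ z, ∑ y, q x y z = ∑ x, ∑ y, ∑ z, q x y z :=
      Finset.sum_congr rfl fun x _ => Finset.sum_comm
    rw [← h3, ← h2, ← h1, hsum]
  -- pointwise Gibbs estimate
  have main : ∑ x, ∑ y, ∑ z,
      q x y z * (log (A x z) + log (B y z) - log (q x y z) - log (Q z))
      ≤ ∑ x, ∑ y, ∑ z, (A x z * B y z / Q z - q x y z) := by
    refine Finset.sum_le_sum fun x _ => Finset.sum_le_sum fun y _ =>
      Finset.sum_le_sum fun z _ => ?_
    exact pointwise_bound (hq x y z) (hqA x y z) (hqB x y z) (hAQ x z) (hBQ y z)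
  have rhs_le : ∑ x, ∑ y, ∑ z, (A x z * B y z / Q z - q x y z) ≤ 0 := by
    have h1 : ∑ x, ∑ y, ∑ z, A x z * B y z / Q z ≤ 1 := by
      have hre : ∑ x, ∑ y, ∑ z, A x z * B y z / Q z
          = ∑ z, ∑ x, ∑ y, A x z * B y z / Q z := by
        calc ∑ x, ∑ y, ∑ z, A x z * B y z / Q z
            = ∑ x, ∑ z, ∑ y, A x z * B y z / Q z :=
              Finset.sum_congr rfl fun x _ => Finset.sum_comm
          _ = ∑ z, ∑ x, ∑ y, A x z * B y z / Q z := Finset.sum_comm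
      rw [hre]
      have h2 : ∀ z, ∑ x, ∑ y, A x z * B y z / Q z ≤ Q z := by
        intro z
        have h3 : ∑ x, ∑ y, A x z * B y z / Q z = Q z * Q z / Q z := by
          calc ∑ x, ∑ y, A x z * B y z / Q z
              = ∑ x, (∑ y, A x z * B y z) / Q z :=
                Finset.sum_congr rfl fun x _ => (Finset.sum_div _ _ _).symm
            _ = (∑ x, ∑ y, A x z * B y z) / Q z := (Finset.sum_div _ _ _).symm
            _ = (∑ x, A x z) * (∑ y, B y z) / Q z := by rw [Finset.sum_mul_sum]
            _ = Q z * Q z / Q z := by rw [← hQA, ← hQB]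
        rw [h3]
        rcases eq_or_lt_of_le (hQ0 z) with h4 | h4
        · rw [← h4]; simp
        · rw [mul_div_assoc, div_self (ne_of_gt h4), mul_one]
      calc ∑ z, ∑ x, ∑ y, A x z * B y z / Q z ≤ ∑ z, Q z :=
            Finset.sum_le_sum fun z _ => h2 z
        _ = 1 := hsum
    simp only [Finset.sum_sub_distrib]
    linarith
  have split : ∑ x, ∑ y, ∑ z,
      q x y z * (log (A x z) + log (B y z) - log (q x y z) - log (Q z))
      = ((∑ x, ∑ y, ∑ z, -(q x y z * log (q x y z)))
        + ∑ x, ∑ y, ∑ z, -(q x y z * log (Q z)))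
        - (∑ x, ∑ y, ∑ z, -(q x y z * log (A x z)))
        - ∑ x, ∑ y, ∑ z, -(q x y z * log (B y z)) := by
    simp only [← Finset.sum_add_distrib, ← Finset.sum_sub_distrib]
    refine Finset.sum_congr rfl fun x _ => Finset.sum_congr rfl fun y _ =>
      Finset.sum_congr rfl fun z _ => by ring
  rw [eq_q, eq_A, eq_B, eq_Q]
  have hfin := le_trans main rhs_le
  rw [split] at hfin
  linarith

lemma toReal_measure_iUnion {ι : Type*} [Fintype ι] (μ : Measure Ω) [IsFiniteMeasure μ]
    (t : ι → Set Ω) (hm : ∀ i, MeasurableSet (t i)) (hd : Pairwise (Function.onFun Disjoint t)) :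
    (μ (⋃ i, t i)).toReal = ∑ i, (μ (t i)).toReal := by
  rw [measure_iUnion hd hm, tsum_fintype,
    ENNReal.toReal_sum (fun i _ => measure_ne_top μ _)]

lemma cmi_nonneg {𝒳 𝒴 𝒵 : Type*} [Fintype 𝒳] [Fintype 𝒴] [Fintype 𝒵]
    (μ : Measure Ω) [IsProbabilityMeasure μ] {X : Ω → 𝒳} {Y : Ω → 𝒴} {Z : Ω → 𝒵}
    (hX : DiscreteRV X) (hY : DiscreteRV Y) (hZ : DiscreteRV Z) :
    0 ≤ cmi μ X Y Z := by
  classical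
  have hmeas : ∀ (x : 𝒳) (y : 𝒴) (z : 𝒵),
      MeasurableSet ((X ⁻¹' {x} ∩ Y ⁻¹' {y}) ∩ Z ⁻¹' {z}) :=
    fun x y z => ((hX x).inter (hY y)).inter (hZ z)
  have hA : ∀ (x : 𝒳) (z : 𝒵), (μ (pair X Z ⁻¹' {(x, z)})).toReal
      = ∑ y, (μ ((X ⁻¹' {x} ∩ Y ⁻¹' {y}) ∩ Z ⁻¹' {z})).toReal := by
    intro x z
    have hset : pair X Z ⁻¹' {(x, z)}
        = ⋃ y, (X ⁻¹' {x} ∩ Y ⁻¹' {y}) ∩ Z ⁻¹' {z} := by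
      ext ω
      simp only [Set.mem_preimage, Set.mem_singleton_iff, Prod.ext_iff, pair,
        Set.mem_iUnion, Set.mem_inter_iff]
      constructor
      · rintro ⟨hh1, hh2⟩; exact ⟨Y ω, ⟨hh1, rfl⟩, hh2⟩
      · rintro ⟨y, ⟨hh1, _⟩, hh2⟩; exact ⟨hh1, hh2⟩
    have hd : Pairwise (Function.onFun Disjoint (fun y => (X ⁻¹' {x} ∩ Y ⁻¹' {y}) ∩ Z ⁻¹' {z})) := by
      intro y y' hne
      refine Set.disjoint_left.2 fun ω h h' => hne ?_
      have e1 : Y ω = y := h.1.2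
      have e2 : Y ω = y' := h'.1.2
      rw [← e1, e2]
    rw [hset, toReal_measure_iUnion μ _ (fun y => hmeas x y z) hd]
  have hB : ∀ (y : 𝒴) (z : 𝒵), (μ (pair Y Z ⁻¹' {(y, z)})).toReal
      = ∑ x, (μ ((X ⁻¹' {x} ∩ Y ⁻¹' {y}) ∩ Z ⁻¹' {z})).toReal := by
    intro y z
    have hset : pair Y Z ⁻¹' {(y, z)}
        = ⋃ x, (X ⁻¹' {x} ∩ Y ⁻¹' {y}) ∩ Z ⁻¹' {z} := by
      ext ω
      simp only [Set.mem_preimage, Set.mem_singleton_iff, Prod.ext_iff, pair,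
        Set.mem_iUnion, Set.mem_inter_iff]
      constructor
      · rintro ⟨hh1, hh2⟩; exact ⟨X ω, ⟨rfl, hh1⟩, hh2⟩
      · rintro ⟨x, ⟨_, hh1⟩, hh2⟩; exact ⟨hh1, hh2⟩
    have hd : Pairwise (Function.onFun Disjoint (fun x => (X ⁻¹' {x} ∩ Y ⁻¹' {y}) ∩ Z ⁻¹' {z})) := by
      intro x x' hne
      refine Set.disjoint_left.2 fun ω h h' => hne ?_
      have e1 : X ω = x := h.1.1
      have e2 : X ω = x' := h'.1.1
      rw [← e1, e2]
    rw [hset, toReal_measure_iUnion μ _ (fun x => hmeas x y z) hd]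
  have hQA : ∀ (z : 𝒵), (μ (Z ⁻¹' {z})).toReal
      = ∑ x, (μ (pair X Z ⁻¹' {(x, z)})).toReal := by
    intro z
    have hset : Z ⁻¹' {z} = ⋃ x, pair X Z ⁻¹' {(x, z)} := by
      ext ω
      simp only [Set.mem_preimage, Set.mem_singleton_iff, Set.mem_iUnion, pair, Prod.ext_iff]
      constructor
      · intro h; exact ⟨X ω, rfl, h⟩
      · rintro ⟨x, _, h⟩; exact h
    have hd : Pairwise (Function.onFun Disjoint (fun x => pair X Z ⁻¹' {(x, z)})) := by
      intro x x' hne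
      refine Set.disjoint_left.2 fun ω h h' => hne ?_
      have e1 : X ω = x := (Prod.ext_iff.1 h).1
      have e2 : X ω = x' := (Prod.ext_iff.1 h').1
      rw [← e1, e2]
    rw [hset, toReal_measure_iUnion μ _ (fun x => discrete_pair hX hZ (x, z)) hd]
  have hQB : ∀ (z : 𝒵), (μ (Z ⁻¹' {z})).toReal
      = ∑ y, (μ (pair Y Z ⁻¹' {(y, z)})).toReal := by
    intro z
    have hset : Z ⁻¹' {z} = ⋃ y, pair Y Z ⁻¹' {(y, z)} := by
      ext ω
      simp only [Set.mem_preimage, Set.mem_singleton_iff, Set.mem_iUnion, pair, Prod.ext_iff]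
      constructor
      · intro h; exact ⟨Y ω, rfl, h⟩
      · rintro ⟨y, _, h⟩; exact h
    have hd : Pairwise (Function.onFun Disjoint (fun y => pair Y Z ⁻¹' {(y, z)})) := by
      intro y y' hne
      refine Set.disjoint_left.2 fun ω h h' => hne ?_
      have e1 : Y ω = y := (Prod.ext_iff.1 h).1
      have e2 : Y ω = y' := (Prod.ext_iff.1 h').1
      rw [← e1, e2]
    rw [hset, toReal_measure_iUnion μ _ (fun y => discrete_pair hY hZ (y, z)) hd]
  have hsum : ∑ z, (μ (Z ⁻¹' {z})).toReal = 1 := by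
    have hset : (Set.univ : Set Ω) = ⋃ z, Z ⁻¹' {z} := by
      ext ω; simp
    have hd : Pairwise (Function.onFun Disjoint (fun z => Z ⁻¹' {z})) := by
      intro z z' hne
      refine Set.disjoint_left.2 fun ω h h' => hne ?_
      have e1 : Z ω = z := h
      have e2 : Z ω = z' := h'
      rw [← e1, e2]
    have hu := toReal_measure_iUnion μ (fun z => Z ⁻¹' {z}) hZ hd
    rw [← hset, measure_univ, ENNReal.toReal_one] at hu
    exact hu.symm
  have entXZ : ent μ (pair X Z)
      = ∑ x, ∑ z, negMulLog ((μ (pair X Z ⁻¹' {(x, z)})).toReal) := by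
    rw [ent, tsum_fintype, Fintype.sum_prod_type]
  have entYZ : ent μ (pair Y Z)
      = ∑ y, ∑ z, negMulLog ((μ (pair Y Z ⁻¹' {(y, z)})).toReal) := by
    rw [ent, tsum_fintype, Fintype.sum_prod_type]
  have entZ : ent μ Z = ∑ z, negMulLog ((μ (Z ⁻¹' {z})).toReal) := by
    rw [ent, tsum_fintype]
  have entXYZ : ent μ (pair (pair X Y) Z)
      = ∑ x, ∑ y, ∑ z, negMulLog ((μ ((X ⁻¹' {x} ∩ Y ⁻¹' {y}) ∩ Z ⁻¹' {z})).toReal) := by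
    rw [ent, tsum_fintype, Fintype.sum_prod_type]
    rw [show (∑ p : 𝒳 × 𝒴, ∑ z : 𝒵,
        negMulLog ((μ (pair (pair X Y) Z ⁻¹' {(p, z)})).toReal))
        = ∑ p : 𝒳 × 𝒴, ∑ z : 𝒵,
        negMulLog ((μ ((X ⁻¹' {p.1} ∩ Y ⁻¹' {p.2}) ∩ Z ⁻¹' {z})).toReal) from ?_,
      Fintype.sum_prod_type]
    refine Finset.sum_congr rfl fun p _ => Finset.sum_congr rfl fun z _ => ?_
    have hset : pair (pair X Y) Z ⁻¹' {(p, z)}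
        = (X ⁻¹' {p.1} ∩ Y ⁻¹' {p.2}) ∩ Z ⁻¹' {z} := by
      ext ω
      simp only [Set.mem_preimage, Set.mem_singleton_iff, Prod.ext_iff, pair,
        Set.mem_inter_iff]
    rw [hset]
  have key := key_ineq
    (fun x y z => (μ ((X ⁻¹' {x} ∩ Y ⁻¹' {y}) ∩ Z ⁻¹' {z})).toReal)
    (fun x z => (μ (pair X Z ⁻¹' {(x, z)})).toReal)
    (fun y z => (μ (pair Y Z ⁻¹' {(y, z)})).toReal)
    (fun z => (μ (Z ⁻¹' {z})).toReal)
    (fun x y z => ENNReal.toReal_nonneg) hA hB hQA hQB hsum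
  rw [cmi, entXZ, entYZ, entZ, entXYZ]
  linarith
end Aux

section Structural

lemma cmi_swap {𝒳 𝒴 𝒵 : Type*} [Fintype 𝒳] [Fintype 𝒴] [Fintype 𝒵]
    (μ : Measure Ω) (X : Ω → 𝒳) (Y : Ω → 𝒴) (Z : Ω → 𝒵) :
    cmi μ X Y Z = cmi μ Y X Z := by
  unfold cmi
  have h : ent μ (pair (pair X Y) Z) = ent μ (pair (pair Y X) Z) :=
    ent_congr_s7 μ (fun p => ((p.1.2, p.1.1), p.2)) (fun p => ((p.1.2, p.1.1), p.2))
      (fun ω => rfl) (fun ω => rfl)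
  rw [h]; ring

/-- Chain-rule consequence: if `I[X;Y|Z] = 0` then also
`I[X;Y|Z,φ(Y)] = 0` for any function `φ` of `Y`. -/
lemma cmi_adjoin {𝒳 𝒴 𝒵 𝓜 : Type*} [Fintype 𝒳] [Fintype 𝒴] [Fintype 𝒵] [Fintype 𝓜]
    (μ : Measure Ω) [IsProbabilityMeasure μ] {X : Ω → 𝒳} {Y : Ω → 𝒴} {Z : Ω → 𝒵}
    (hX : DiscreteRV X) (hY : DiscreteRV Y) (hZ : DiscreteRV Z)
    (φ : 𝒴 → 𝓜) (h : cmi μ X Y Z = 0) :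
    cmi μ X Y (pair Z (fun ω => φ (Y ω))) = 0 := by
  have hφY : DiscreteRV (fun ω => φ (Y ω)) := discrete_comp hY φ
  have n1 : 0 ≤ cmi μ X (fun ω => φ (Y ω)) Z := cmi_nonneg μ hX hφY hZ
  have n2 : 0 ≤ cmi μ X Y (pair Z (fun ω => φ (Y ω))) :=
    cmi_nonneg μ hX hY (discrete_pair hZ hφY)
  have chain : cmi μ X (fun ω => φ (Y ω)) Z + cmi μ X Y (pair Z (fun ω => φ (Y ω)))
      = cmi μ X Y Z := by
    unfold cmi
    have e1 : ent μ (pair X (pair Z (fun ω => φ (Y ω))))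
        = ent μ (pair (pair X (fun ω => φ (Y ω))) Z) :=
      ent_congr_s7 μ (fun p => ((p.1, p.2.2), p.2.1)) (fun p => (p.1.1, (p.2, p.1.2)))
        (fun ω => rfl) (fun ω => rfl)
    have e2 : ent μ (pair Y (pair Z (fun ω => φ (Y ω)))) = ent μ (pair Y Z) :=
      ent_congr_s7 μ (fun p => (p.1, p.2.1)) (fun p => (p.1, (p.2, φ p.1)))
        (fun ω => rfl) (fun ω => rfl)
    have e3 : ent μ (pair (pair X Y) (pair Z (fun ω => φ (Y ω))))
        = ent μ (pair (pair X Y) Z) :=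
      ent_congr_s7 μ (fun p => (p.1, p.2.1)) (fun p => (p.1, (p.2, φ p.1.2)))
        (fun ω => rfl) (fun ω => rfl)
    have e4 : ent μ (pair (fun ω => φ (Y ω)) Z) = ent μ (pair Z (fun ω => φ (Y ω))) :=
      ent_congr_s7 μ (fun p => (p.2, p.1)) (fun p => (p.2, p.1))
        (fun ω => rfl) (fun ω => rfl)
    rw [e1, e2, e3, e4]
    ring
  linarith

end Structural

/-- If `(R,S)` is trivial and `f, g` are deterministic functions, then
`(⟨R, g∘S⟩, ⟨S, f∘R⟩)` is trivial. -/
theorem stmt7 {Ω : Type*} [MeasurableSpace Ω] (μ : Measure Ω) [IsProbabilityMeasure μ]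
    {𝓡 𝓢 𝓜 𝓝 : Type} [Fintype 𝓡] [Fintype 𝓢] [Fintype 𝓜] [Fintype 𝓝]
    [Nonempty 𝓡] [Nonempty 𝓢] [Nonempty 𝓜] [Nonempty 𝓝]
    (R : Ω → 𝓡) (S : Ω → 𝓢) (hR : DiscreteRV R) (hS : DiscreteRV S)
    (htriv : IsTrivialPair μ R S) (f : 𝓡 → 𝓜) (g : 𝓢 → 𝓝) :
    IsTrivialPair μ (pair R (fun ω => g (S ω))) (pair S (fun ω => f (R ω))) := by
  classical
  obtain ⟨𝒵, hfin, Z, hZ, h1, h2, h3⟩ := htriv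
  haveI : Fintype 𝒵 := hfin
  have hfRd : DiscreteRV (fun ω => f (R ω)) := discrete_comp hR f
  have hgSd : DiscreteRV (fun ω => g (S ω)) := discrete_comp hS g
  refine ⟨𝒵 × 𝓜 × 𝓝, inferInstance,
    pair Z (pair (fun ω => f (R ω)) (fun ω => g (S ω))),
    discrete_pair hZ (discrete_pair hfRd hgSd), ?_, ?_, ?_⟩
  · -- I[X'; Y' | Z'] = 0
    have s1 : cmi μ R S (pair Z (fun ω => g (S ω))) = 0 := cmi_adjoin μ hR hS hZ g h1
    have s2 : cmi μ S R (pair Z (fun ω => g (S ω))) = 0 := by rw [cmi_swap]; exact s1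
    have s3 : cmi μ S R (pair (pair Z (fun ω => g (S ω))) (fun ω => f (R ω))) = 0 :=
      cmi_adjoin μ hS hR (discrete_pair hZ hgSd) f s2
    have s4 : cmi μ R S (pair (pair Z (fun ω => g (S ω))) (fun ω => f (R ω))) = 0 := by
      rw [cmi_swap]; exact s3
    have key : cmi μ (pair R (fun ω => g (S ω))) (pair S (fun ω => f (R ω)))
        (pair Z (pair (fun ω => f (R ω)) (fun ω => g (S ω))))
        = cmi μ R S (pair (pair Z (fun ω => g (S ω))) (fun ω => f (R ω))) := by
      unfold cmi
      have e1 : ent μ (pair (pair R (fun ω => g (S ω)))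
            (pair Z (pair (fun ω => f (R ω)) (fun ω => g (S ω)))))
          = ent μ (pair R (pair (pair Z (fun ω => g (S ω))) (fun ω => f (R ω)))) :=
        ent_congr_s7 μ
          (fun p => (p.1.1, ((p.2.1, p.1.2), p.2.2.1)))
          (fun p => ((p.1, p.2.1.2), (p.2.1.1, (p.2.2, p.2.1.2))))
          (fun ω => rfl) (fun ω => rfl)
      have e2 : ent μ (pair (pair S (fun ω => f (R ω)))
            (pair Z (pair (fun ω => f (R ω)) (fun ω => g (S ω)))))
          = ent μ (pair S (pair (pair Z (fun ω => g (S ω))) (fun ω => f (R ω)))) :=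
        ent_congr_s7 μ
          (fun p => (p.1.1, ((p.2.1, p.2.2.2), p.1.2)))
          (fun p => ((p.1, p.2.2), (p.2.1.1, (p.2.2, p.2.1.2))))
          (fun ω => rfl) (fun ω => rfl)
      have e3 : ent μ (pair (pair (pair R (fun ω => g (S ω))) (pair S (fun ω => f (R ω))))
            (pair Z (pair (fun ω => f (R ω)) (fun ω => g (S ω)))))
          = ent μ (pair (pair R S) (pair (pair Z (fun ω => g (S ω))) (fun ω => f (R ω)))) :=
        ent_congr_s7 μ
          (fun p => ((p.1.1.1, p.1.2.1), ((p.2.1, p.2.2.2), p.2.2.1)))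
          (fun p => (((p.1.1, p.2.1.2), (p.1.2, p.2.2)), (p.2.1.1, (p.2.2, p.2.1.2))))
          (fun ω => rfl) (fun ω => rfl)
      have e4 : ent μ (pair Z (pair (fun ω => f (R ω)) (fun ω => g (S ω))))
          = ent μ (pair (pair Z (fun ω => g (S ω))) (fun ω => f (R ω))) :=
        ent_congr_s7 μ
          (fun p => ((p.1, p.2.2), p.2.1))
          (fun p => (p.1.1, (p.2, p.1.2)))
          (fun ω => rfl) (fun ω => rfl)
      rw [e1, e2, e3, e4]
    rw [key]
    exact s4
  · -- I[Z'; X' | Y'] = 0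
    have s1 : cmi μ Z R (pair S (fun ω => f (R ω))) = 0 := cmi_adjoin μ hZ hR hS f h2
    have key : cmi μ (pair Z (pair (fun ω => f (R ω)) (fun ω => g (S ω))))
        (pair R (fun ω => g (S ω))) (pair S (fun ω => f (R ω)))
        = cmi μ Z R (pair S (fun ω => f (R ω))) := by
      unfold cmi
      have e1 : ent μ (pair (pair Z (pair (fun ω => f (R ω)) (fun ω => g (S ω))))
            (pair S (fun ω => f (R ω))))
          = ent μ (pair Z (pair S (fun ω => f (R ω)))) :=
        ent_congr_s7 μ
          (fun p => (p.1.1, p.2))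
          (fun p => ((p.1, (p.2.2, g p.2.1)), p.2))
          (fun ω => rfl) (fun ω => rfl)
      have e2 : ent μ (pair (pair R (fun ω => g (S ω))) (pair S (fun ω => f (R ω))))
          = ent μ (pair R (pair S (fun ω => f (R ω)))) :=
        ent_congr_s7 μ
          (fun p => (p.1.1, p.2))
          (fun p => ((p.1, g p.2.1), p.2))
          (fun ω => rfl) (fun ω => rfl)
      have e3 : ent μ (pair (pair (pair Z (pair (fun ω => f (R ω)) (fun ω => g (S ω))))
            (pair R (fun ω => g (S ω)))) (pair S (fun ω => f (R ω))))
          = ent μ (pair (pair Z R) (pair S (fun ω => f (R ω)))) :=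
        ent_congr_s7 μ
          (fun p => ((p.1.1.1, p.1.2.1), p.2))
          (fun p => (((p.1.1, (f p.1.2, g p.2.1)), (p.1.2, g p.2.1)), p.2))
          (fun ω => rfl) (fun ω => rfl)
      rw [e1, e2, e3]
    rw [key]
    exact s1
  · -- I[Z'; Y' | X'] = 0
    have s1 : cmi μ Z S (pair R (fun ω => g (S ω))) = 0 := cmi_adjoin μ hZ hS hR g h3
    have key : cmi μ (pair Z (pair (fun ω => f (R ω)) (fun ω => g (S ω))))
        (pair S (fun ω => f (R ω))) (pair R (fun ω => g (S ω)))
        = cmi μ Z S (pair R (fun ω => g (S ω))) := by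
      unfold cmi
      have e1 : ent μ (pair (pair Z (pair (fun ω => f (R ω)) (fun ω => g (S ω))))
            (pair R (fun ω => g (S ω))))
          = ent μ (pair Z (pair R (fun ω => g (S ω)))) :=
        ent_congr_s7 μ
          (fun p => (p.1.1, p.2))
          (fun p => ((p.1, (f p.2.1, p.2.2)), p.2))
          (fun ω => rfl) (fun ω => rfl)
      have e2 : ent μ (pair (pair S (fun ω => f (R ω))) (pair R (fun ω => g (S ω))))
          = ent μ (pair S (pair R (fun ω => g (S ω)))) :=
        ent_congr_s7 μ
          (fun p => (p.1.1, p.2))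
          (fun p => ((p.1, f p.2.1), p.2))
          (fun ω => rfl) (fun ω => rfl)
      have e3 : ent μ (pair (pair (pair Z (pair (fun ω => f (R ω)) (fun ω => g (S ω))))
            (pair S (fun ω => f (R ω)))) (pair R (fun ω => g (S ω))))
          = ent μ (pair (pair Z S) (pair R (fun ω => g (S ω)))) :=
        ent_congr_s7 μ
          (fun p => ((p.1.1.1, p.1.2.1), p.2))
          (fun p => (((p.1.1, (f p.2.1, p.2.2)), (p.1.2, f p.2.1)), p.2))
          (fun ω => rfl) (fun ω => rfl)
      rw [e1, e2, e3]
    rw [key]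
    exact s1

end SecureComputation
end
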